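/- With the Dulac function ψ(M,F) = (M+γM_S*)/(F(M+εγM_S*)), the divergence of ψ times the vector field of the SIT system with constant sterile population is strictly negative on the open positive quadrant; concretely, ∂/∂M [rρ e^{-β(M+F)} - μ_M M (M+γM_S*)/(F(M+εγM_S*))] + ∂/∂F [(1-r)ρ e^{-β(M+F)} - μ_F (M+γM_S*)/(M+εγM_S*)] = -rρβ e^{-β(M+F)} - (μ_M/F)·(εγM_S*(2M+γM_S*)+M²)/(M+εγM_S*)² - (1-r)βρ e^{-β(M+F)} < 0 for all M > 0, F > 0. -/

import Mathlib

open Real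

theorem dulac_divergence_negative
    (r ρ β μM μF γ ε MS : ℝ) (hr : r ∈ Set.Ioo (0:ℝ) 1) (hρ : 0 < ρ) (hβ : 0 < β)
    (hμM : 0 < μM) (hμF : 0 < μF) (hγ : γ ∈ Set.Ioc (0:ℝ) 1) (hε : ε ∈ Set.Ico (0:ℝ) 1)
    (hMS : 0 < MS) :
    ∀ M F : ℝ, 0 < M → 0 < F →
      deriv (fun M' : ℝ =>
          r * ρ * Real.exp (-β * (M' + F))
            - μM * M' * (M' + γ * MS) / (F * (M' + ε * γ * MS))) M
      + deriv (fun F' : ℝ =>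
          (1 - r) * ρ * Real.exp (-β * (M + F'))
            - μF * (M + γ * MS) / (M + ε * γ * MS)) F
      = - r * ρ * β * Real.exp (-β * (M + F))
          - (μM / F) * ((ε * γ * MS * (2 * M + γ * MS) + M ^ 2) / (M + ε * γ * MS) ^ 2)
          - (1 - r) * β * ρ * Real.exp (-β * (M + F)) ∧
      deriv (fun M' : ℝ =>
          r * ρ * Real.exp (-β * (M' + F))
            - μM * M' * (M' + γ * MS) / (F * (M' + ε * γ * MS))) M
      + deriv (fun F' : ℝ =>
          (1 - r) * ρ * Real.exp (-β * (M + F'))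
            - μF * (M + γ * MS) / (M + ε * γ * MS)) F < 0 := by
  intro M F hM hF
  have hε0 : 0 ≤ ε := hε.1
  have hγ0 : 0 < γ := hγ.1
  have hb : 0 ≤ ε * γ * MS := by positivity
  have hMb : 0 < M + ε * γ * MS := by linarith
  have hMb' : M + ε * γ * MS ≠ 0 := ne_of_gt hMb
  have hF' : F ≠ 0 := ne_of_gt hF
  have hden : F * (M + ε * γ * MS) ≠ 0 := mul_ne_zero hF' hMb'
  -- derivative in M
  have h1 : HasDerivAt (fun M' : ℝ => r * ρ * Real.exp (-β * (M' + F)))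
      (r * ρ * (Real.exp (-β * (M + F)) * (-β))) M := by
    have : HasDerivAt (fun M' : ℝ => -β * (M' + F)) (-β) M := by
      simpa using ((hasDerivAt_id M).add_const F).const_mul (-β)
    simpa [mul_assoc] using (this.exp.const_mul (r * ρ))
  have h2u : HasDerivAt (fun M' : ℝ => μM * M' * (M' + γ * MS))
      (μM * (M + γ * MS) + μM * M) M := by
    have ha : HasDerivAt (fun M' : ℝ => μM * M') μM M := by
      simpa using (hasDerivAt_id M).const_mul μM
    have hb2 : HasDerivAt (fun M' : ℝ => M' + γ * MS) 1 M :=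
      (hasDerivAt_id M).add_const _
    exact (ha.mul hb2).congr_deriv (by ring)
  have h2v : HasDerivAt (fun M' : ℝ => F * (M' + ε * γ * MS)) F M := by
    simpa using ((hasDerivAt_id M).add_const (ε * γ * MS)).const_mul F
  have h2 : HasDerivAt (fun M' : ℝ => μM * M' * (M' + γ * MS) / (F * (M' + ε * γ * MS)))
      (((μM * (M + γ * MS) + μM * M) * (F * (M + ε * γ * MS))
        - μM * M * (M + γ * MS) * F) / (F * (M + ε * γ * MS)) ^ 2) M :=
    h2u.div h2v hden
  have hM1 : HasDerivAt (fun M' : ℝ =>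
      r * ρ * Real.exp (-β * (M' + F))
        - μM * M' * (M' + γ * MS) / (F * (M' + ε * γ * MS)))
      (r * ρ * (Real.exp (-β * (M + F)) * (-β))
        - ((μM * (M + γ * MS) + μM * M) * (F * (M + ε * γ * MS))
          - μM * M * (M + γ * MS) * F) / (F * (M + ε * γ * MS)) ^ 2) M := h1.sub h2
  -- derivative in F
  have h3 : HasDerivAt (fun F' : ℝ =>
      (1 - r) * ρ * Real.exp (-β * (M + F'))
        - μF * (M + γ * MS) / (M + ε * γ * MS))
      ((1 - r) * ρ * (Real.exp (-β * (M + F)) * (-β)) - 0) F := by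
    have hc : HasDerivAt (fun F' : ℝ => -β * (M + F')) (-β) F := by
      simpa using ((hasDerivAt_id F).const_add M).const_mul (-β)
    exact ((hc.exp.const_mul ((1 - r) * ρ)).sub_const _).congr_deriv (by ring)
  rw [hM1.deriv, h3.deriv]
  constructor
  · field_simp
    ring
  · have key : r * ρ * (Real.exp (-β * (M + F)) * (-β))
        - ((μM * (M + γ * MS) + μM * M) * (F * (M + ε * γ * MS))
          - μM * M * (M + γ * MS) * F) / (F * (M + ε * γ * MS)) ^ 2
        + ((1 - r) * ρ * (Real.exp (-β * (M + F)) * (-β)) - 0)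
        = - r * ρ * β * Real.exp (-β * (M + F))
          - (μM / F) * ((ε * γ * MS * (2 * M + γ * MS) + M ^ 2) / (M + ε * γ * MS) ^ 2)
          - (1 - r) * β * ρ * Real.exp (-β * (M + F)) := by
      field_simp
      ring
    rw [key]
    have he : 0 < Real.exp (-β * (M + F)) := Real.exp_pos _
    have h1' : 0 < r * ρ * β * Real.exp (-β * (M + F)) := by
      have := hr.1; positivity
    have h2' : 0 < (1 - r) * β * ρ * Real.exp (-β * (M + F)) := by
      have : 0 < 1 - r := by linarith [hr.2]
      positivity
    have h3' : 0 < (μM / F) * ((ε * γ * MS * (2 * M + γ * MS) + M ^ 2) / (M + ε * γ * MS) ^ 2) := by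
      have hnum : 0 < ε * γ * MS * (2 * M + γ * MS) + M ^ 2 := by
        have : 0 ≤ ε * γ * MS * (2 * M + γ * MS) := by
          apply mul_nonneg hb; nlinarith [hγ.1, hMS]
        nlinarith
      positivity
    linarith
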